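/- Let P be a binary partial group and let BP_n ⊆ P^n be the set of length-n words w such that every full parenthesization of w gives a defined iterated product in P and all these products have the same value. If w = (a_1, ..., a_n) ∈ BP_n, then w† := (a_n†, ..., a_1†) ∈ BP_n; moreover, if the common product of w is a, then the common product of w† is a†. -/

import Mathlib

/-- A unital partial magma: a partially defined binary operation (encoded via
`Option`) with a two-sided unit. -/
structure UnitalPartialMagma (P : Type*) where
  mul : P → P → Option P
  one : P
  mul_one : ∀ a, mul a one = some a
  one_mul : ∀ a, mul one a = some a

/-- A binary partial group: a unital partial magma where each element has an
inverse `inv a` with: `a*b` defined implies `(inv a)*(a*b)` defined and equal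
to `b`, and `b*a` defined implies `(b*a)*(inv a)` defined and equal to `b`. -/
structure BinaryPartialGroup (P : Type*) extends UnitalPartialMagma P where
  inv : P → P
  inv_left : ∀ a b c, mul a b = some c → mul (inv a) c = some b
  inv_right : ∀ a b c, mul b a = some c → mul c (inv a) = some b

/-- Full parenthesizations of words, as binary trees. -/
inductive PTree : Type where
  | leaf : PTree
  | node : PTree → PTree → PTree

/-- The number of letters a parenthesization applies to. -/
def PTree.size : PTree → Nat
  | .leaf => 1
  | .node l r => l.size + r.size

/-- The mirrored parenthesization. -/
def PTree.mirror : PTree → PTree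
  | .leaf => .leaf
  | .node l r => .node r.mirror l.mirror

/-- The partial iterated multiplication of a word determined by a full
parenthesization. -/
def evalTree {P : Type*} (M : UnitalPartialMagma P) : PTree → List P → Option P
  | .leaf, [a] => some a
  | .leaf, _ => none
  | .node l r, w =>
      (evalTree M l (w.take l.size)).bind fun x =>
        (evalTree M r (w.drop l.size)).bind fun y => M.mul x y

/-- `IsProd M w a` says that every full parenthesization of the word `w` gives a
defined iterated product, and all these products equal `a`; the empty word has
product the unit.  Thus `w ∈ BP_n` iff `∃ a, IsProd M w a`. -/
def IsProd {P : Type*} (M : UnitalPartialMagma P) (w : List P) (a : P) : Prop :=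
  (w = [] → a = M.one) ∧ ∀ t : PTree, t.size = w.length → evalTree M t w = some a

lemma PTree.mirror_size (t : PTree) : t.mirror.size = t.size := by
  induction t with
  | leaf => rfl
  | node l r ihl ihr => simp [PTree.mirror, PTree.size, ihl, ihr]; omega

lemma PTree.mirror_mirror (t : PTree) : t.mirror.mirror = t := by
  induction t with
  | leaf => rfl
  | node l r ihl ihr => simp [PTree.mirror, ihl, ihr]

lemma inv_mul_aux {P : Type*} (G : BinaryPartialGroup P) {a b c : P}
    (h : G.mul a b = some c) : G.mul (G.inv b) (G.inv a) = some (G.inv c) := by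
  have h1 := G.inv_left a b c h
  have h2 := G.inv_right c (G.inv a) b h1
  exact G.inv_left b (G.inv c) (G.inv a) h2

lemma evalTree_size {P : Type*} (M : UnitalPartialMagma P) :
    ∀ (t : PTree) (w : List P) (c : P), evalTree M t w = some c → t.size = w.length := by
  intro t
  induction t with
  | leaf =>
    intro w c h
    match w with
    | [x] => rfl
    | [] => simp [evalTree] at h
    | x :: y :: l => simp [evalTree] at h
  | node l r ihl ihr =>
    intro w c h
    simp only [evalTree, Option.bind_eq_some_iff] at h
    obtain ⟨x, hx, y, hy, hxy⟩ := h
    have hl := ihl _ _ hx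
    have hr := ihr _ _ hy
    simp only [List.length_take, List.length_drop] at hl hr
    simp only [PTree.size]
    omega

lemma eval_mirror {P : Type*} (G : BinaryPartialGroup P) :
    ∀ (t : PTree) (w : List P) (c : P),
      evalTree G.toUnitalPartialMagma t w = some c →
      evalTree G.toUnitalPartialMagma t.mirror ((w.map G.inv).reverse) = some (G.inv c) := by
  intro t
  induction t with
  | leaf =>
    intro w c h
    match w with
    | [x] =>
      simp only [evalTree, Option.some.injEq] at h
      simp [evalTree, PTree.mirror, h]
    | [] => simp [evalTree] at h
    | x :: y :: l => simp [evalTree] at h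
  | node l r ihl ihr =>
    intro w c h
    simp only [evalTree, Option.bind_eq_some_iff] at h
    obtain ⟨x, hx, y, hy, hxy⟩ := h
    have hl := evalTree_size _ _ _ _ hx
    have hr := evalTree_size _ _ _ _ hy
    simp only [List.length_take, List.length_drop] at hl hr
    have key : (w.map G.inv).reverse
        = ((w.drop l.size).map G.inv).reverse ++ ((w.take l.size).map G.inv).reverse := by
      rw [← List.reverse_append, ← List.map_append, List.take_append_drop]
    have hlen2 : (((w.drop l.size).map G.inv).reverse).length = r.size := by
      simp; omega
    have h1 := ihr _ _ hy
    have h2 := ihl _ _ hx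
    simp only [PTree.mirror, evalTree, PTree.mirror_size, key]
    rw [List.take_left' hlen2, List.drop_left' hlen2, h1, h2]
    simp [inv_mul_aux G hxy]

/-- If `w ∈ BP_n` with common product `a`, then the reversed-and-inverted word
`w†` is in `BP_n`, with common product `a†`. -/
theorem stmt_12 {P : Type*} (G : BinaryPartialGroup P) (w : List P) (a : P)
    (h : IsProd G.toUnitalPartialMagma w a) :
    IsProd G.toUnitalPartialMagma ((w.map G.inv).reverse) (G.inv a) := by
  obtain ⟨h0, ht⟩ := h
  constructor
  · intro hnil
    have hw : w = [] := by simpa using hnil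
    have ha := h0 hw
    subst ha
    have h1 := G.inv_left G.one G.one G.one (G.one_mul G.one)
    rw [G.mul_one] at h1
    exact (Option.some.injEq _ _ ▸ h1)
  · intro t hsz
    have hsz' : t.mirror.size = w.length := by
      rw [PTree.mirror_size]
      simpa using hsz
    have h1 := ht t.mirror hsz'
    have h2 := eval_mirror G t.mirror w a h1
    rwa [PTree.mirror_mirror] at h2
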